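/- arXiv:1901.05882 — 3 statements merged into one kernel-verified Lean document; each statement's English description precedes it below -/
import Mathlib

section
/- There is no basis (e_1, e_2) of the algebra B (i.e., no pair of elements of B that is linearly independent over ℂ) satisfying e_2^4 + (p^2+1)·e_1^2·e_2^2 + p^2·e_1^4 = 0, for any real p > 0 with p ≠ 1. -/
set_option maxHeartbeats 1000000 in
/-- For real `p > 0`, `p ≠ 1`, the dual-number algebra `B = ℂ[ρ]/(ρ²)` contains
no basis `(e₁, e₂)` (pair linearly independent over ℂ) with
`e₂⁴ + (p²+1) e₁² e₂² + p² e₁⁴ = 0`. -/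
theorem stmt_7 {B : Type*} [CommRing B] [Algebra ℂ B]
    (ρ : B) (hρ : ρ ^ 2 = 0)
    (b : Module.Basis (Fin 2) ℂ B) (hb0 : b 0 = 1) (hb1 : b 1 = ρ)
    (p : ℝ) (hp : 0 < p) (hp1 : p ≠ 1) :
    ¬ ∃ e1 e2 : B, LinearIndependent ℂ ![e1, e2] ∧
      e2 ^ 4 + ((p : ℂ) ^ 2 + 1) • (e1 ^ 2 * e2 ^ 2) + ((p : ℂ) ^ 2) • e1 ^ 4 = 0 := by
  rintro ⟨e1, e2, hli, heq⟩
  set s : B →ₗ[ℂ] ℂ := b.coord 0 with hs_def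
  set n : B →ₗ[ℂ] ℂ := b.coord 1 with hn_def
  have hs1 : s (1 : B) = 1 := by
    rw [← hb0]; simp [hs_def, Module.Basis.coord_apply]
  have hsρ : s ρ = 0 := by
    rw [← hb1]; simp [hs_def, Module.Basis.coord_apply]
  have hn1 : n (1 : B) = 0 := by
    rw [← hb0]; simp [hn_def, Module.Basis.coord_apply]
  have hnρ : n ρ = 1 := by
    rw [← hb1]; simp [hn_def, Module.Basis.coord_apply]
  have hrepr : ∀ x : B, x = s x • (1 : B) + n x • ρ := by
    intro x
    have h := b.sum_repr x
    rw [Fin.sum_univ_two, hb0, hb1] at h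
    simpa [hs_def, hn_def, Module.Basis.coord_apply] using h.symm
  have hρρ : ρ * ρ = 0 := by rw [← sq]; exact hρ
  have hprod : ∀ x y : B,
      x * y = (s x * s y) • (1 : B) + (s x * n y + n x * s y) • ρ := by
    intro x y
    conv_lhs => rw [hrepr x, hrepr y]
    rw [add_mul, mul_add, mul_add, smul_mul_smul_comm, smul_mul_smul_comm,
      smul_mul_smul_comm, smul_mul_smul_comm, hρρ, smul_zero, add_zero,
      one_mul, mul_one, one_mul, add_smul]
    ring_nf
  have hmuls : ∀ x y : B, s (x * y) = s x * s y := by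
    intro x y
    rw [hprod x y, map_add, map_smul, map_smul, hs1, hsρ, smul_eq_mul,
      smul_eq_mul, mul_one, mul_zero, add_zero]
  have hmuln : ∀ x y : B, n (x * y) = s x * n y + n x * s y := by
    intro x y
    rw [hprod x y, map_add, map_smul, map_smul, hn1, hnρ, smul_eq_mul,
      smul_eq_mul, mul_one, mul_zero, zero_add]
  set a : ℂ := s e1 with ha_def
  set b2 : ℂ := n e1 with hb2_def
  set c : ℂ := s e2 with hc_def
  set d : ℂ := n e2 with hd_def
  have hs2 : ∀ x : B, s (x ^ 2) = (s x) ^ 2 := by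
    intro x; rw [sq, hmuls, sq]
  have hn2 : ∀ x : B, n (x ^ 2) = 2 * s x * n x := by
    intro x; rw [sq, hmuln]; ring
  have h4a : (e1 : B) ^ 4 = (e1 ^ 2) ^ 2 := by ring
  have h4c : (e2 : B) ^ 4 = (e2 ^ 2) ^ 2 := by ring
  -- scalar part of the relation
  have E1 : c ^ 4 + ((p : ℂ) ^ 2 + 1) * (a ^ 2 * c ^ 2) + (p : ℂ) ^ 2 * a ^ 4 = 0 := by
    have h := congrArg s heq
    simp only [h4a, h4c, map_add, map_smul, map_zero, smul_eq_mul, hmuls, hs2] at h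
    rw [← ha_def, ← hc_def] at h
    linear_combination h
  -- nilpotent part of the relation
  have E2 : 4 * c ^ 3 * d
      + ((p : ℂ) ^ 2 + 1) * (a ^ 2 * (2 * c * d) + (2 * a * b2) * c ^ 2)
      + (p : ℂ) ^ 2 * (4 * a ^ 3 * b2) = 0 := by
    have h := congrArg n heq
    simp only [h4a, h4c, map_add, map_smul, map_zero, smul_eq_mul, hmuln, hmuls, hn2, hs2] at h
    rw [← ha_def, ← hb2_def, ← hc_def, ← hd_def] at h
    linear_combination h
  -- p facts
  have hp0 : (p : ℂ) ≠ 0 := by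
    exact_mod_cast (ne_of_gt hp)
  have hpc : (p : ℂ) ^ 2 ≠ 1 := by
    intro h
    have h' : (p : ℝ) ^ 2 = 1 := by exact_mod_cast h
    have h2 : (p - 1) * (p + 1) = 0 := by nlinarith
    rcases mul_eq_zero.mp h2 with h3 | h3
    · exact hp1 (by linarith)
    · linarith
  -- key claim : a*d - b2*c = 0
  have key : a * d - b2 * c = 0 := by
    have hfac : (c ^ 2 + a ^ 2) * (c ^ 2 + (p : ℂ) ^ 2 * a ^ 2) = 0 := by
      linear_combination E1
    rcases mul_eq_zero.mp hfac with h1 | h1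
    · -- c² = -a²
      have h3 : ((p : ℂ) ^ 2 - 1) * (a ^ 2 * (c * d + a * b2)) = 0 := by
        linear_combination (1/2 : ℂ) * E2 - (2 * c * d + ((p : ℂ) ^ 2 + 1) * a * b2) * h1
      have h4 : a ^ 2 * (c * d + a * b2) = 0 :=
        (mul_eq_zero.mp h3).resolve_left (sub_ne_zero.mpr hpc)
      rcases mul_eq_zero.mp h4 with h5 | h5
      · have ha0 : a = 0 := pow_eq_zero_iff (n := 2) (by norm_num) |>.mp h5
        have hc0 : c = 0 := by
          have : c ^ 2 = 0 := by rw [ha0] at h1; linear_combination h1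
          exact pow_eq_zero_iff (n := 2) (by norm_num) |>.mp this
        rw [ha0, hc0]; ring
      · by_cases ha0 : a = 0
        · have hc0 : c = 0 := by
            have : c ^ 2 = 0 := by rw [ha0] at h1; linear_combination h1
            exact pow_eq_zero_iff (n := 2) (by norm_num) |>.mp this
          rw [ha0, hc0]; ring
        · have hc0 : c ≠ 0 := by
            intro hc
            apply ha0
            have : a ^ 2 = 0 := by rw [hc] at h1; linear_combination h1
            exact pow_eq_zero_iff (n := 2) (by norm_num) |>.mp this
          have hz : c * (a * d - b2 * c) = 0 := by
            linear_combination a * h5 - b2 * h1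
          exact (mul_eq_zero.mp hz).resolve_left hc0
    · -- c² = -p²a²
      have h3 : (1 - (p : ℂ) ^ 2) * (a ^ 2 * (c * d + (p : ℂ) ^ 2 * a * b2)) = 0 := by
        linear_combination (1/2 : ℂ) * E2 - (2 * c * d + ((p : ℂ) ^ 2 + 1) * a * b2) * h1
      have h4 : a ^ 2 * (c * d + (p : ℂ) ^ 2 * a * b2) = 0 := by
        refine (mul_eq_zero.mp h3).resolve_left ?_
        intro h; apply hpc; linear_combination -h
      rcases mul_eq_zero.mp h4 with h5 | h5
      · have ha0 : a = 0 := pow_eq_zero_iff (n := 2) (by norm_num) |>.mp h5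
        have hc0 : c = 0 := by
          have : c ^ 2 = 0 := by rw [ha0] at h1; linear_combination h1
          exact pow_eq_zero_iff (n := 2) (by norm_num) |>.mp this
        rw [ha0, hc0]; ring
      · by_cases ha0 : a = 0
        · have hc0 : c = 0 := by
            have : c ^ 2 = 0 := by rw [ha0] at h1; linear_combination h1
            exact pow_eq_zero_iff (n := 2) (by norm_num) |>.mp this
          rw [ha0, hc0]; ring
        · have hc0 : c ≠ 0 := by
            intro hc
            apply ha0
            have hpa : ((p : ℂ) * a) ^ 2 = 0 := by rw [hc] at h1; linear_combination h1
            have := pow_eq_zero_iff (n := 2) (by norm_num) |>.mp hpa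
            rcases mul_eq_zero.mp this with h | h
            · exact absurd h hp0
            · exact h
          have hz : c * (a * d - b2 * c) = 0 := by
            linear_combination a * h5 - b2 * h1
          exact (mul_eq_zero.mp hz).resolve_left hc0
  -- e1 ≠ 0
  have he1 : e1 ≠ 0 := by
    have h := hli.ne_zero 0
    simpa using h
  -- linear dependence
  have hdep : ∃ l : ℂ, e2 = l • e1 := by
    by_cases ha0 : a = 0
    · have hb20 : b2 ≠ 0 := by
        intro h
        apply he1
        rw [hrepr e1, ← ha_def, ← hb2_def, ha0, h, zero_smul, zero_smul, add_zero]
      have hc0 : c = 0 := by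
        have : b2 * c = 0 := by rw [ha0] at key; linear_combination -key
        exact (mul_eq_zero.mp this).resolve_left hb20
      refine ⟨d / b2, ?_⟩
      rw [hrepr e2, hrepr e1, ← ha_def, ← hb2_def, ← hc_def, ← hd_def, ha0, hc0]
      rw [smul_add, smul_smul, smul_smul]
      congr 1
      · simp
      · congr 1
        field_simp
    · refine ⟨c / a, ?_⟩
      rw [hrepr e2, hrepr e1, ← ha_def, ← hb2_def, ← hc_def, ← hd_def]
      rw [smul_add, smul_smul, smul_smul]
      congr 1
      · congr 1
        field_simp
      · congr 1
        rw [div_mul_eq_mul_div, eq_div_iff ha0]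
        linear_combination key
  obtain ⟨l, hl⟩ := hdep
  have h := Fintype.linearIndependent_iff.mp hli ![l, -1] ?_ 1
  · simp at h
  · rw [Fin.sum_univ_two]
    simp [hl]
end

section
/- For any nonzero complex numbers α, β and any two distinct roots s̃_1 ≠ s̃_2 of s^4 + (p^2+1)s^2 + p^2 = 0, the elements e_1 = α·I_1 + β·I_2 and e_2 = α·s̃_1·I_1 + β·s̃_2·I_2 form a ℂ-basis of B_0 and satisfy e_2^4 + (p^2+1)·e_1^2·e_2^2 + p^2·e_1^4 = 0. -/
/-- For nonzero `α, β ∈ ℂ` and distinct roots `s₁ ≠ s₂` of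
`s⁴ + (p²+1)s² + p² = 0`, the elements `e₁ = α I₁ + β I₂` and
`e₂ = α s₁ I₁ + β s₂ I₂` form a ℂ-basis of `B₀` and satisfy
`e₂⁴ + (p²+1) e₁² e₂² + p² e₁⁴ = 0`. -/
theorem stmt_8 {B : Type*} [CommRing B] [Algebra ℂ B]
    (ω : B) (hω : ω ^ 2 = 1)
    (b : Module.Basis (Fin 2) ℂ B) (hb0 : b 0 = 1) (hb1 : b 1 = ω)
    (I1 I2 : B) (hI1 : I1 = (2 : ℂ)⁻¹ • (1 + ω)) (hI2 : I2 = (2 : ℂ)⁻¹ • (1 - ω))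
    (p : ℝ) (hp : 0 < p) (hp1 : p ≠ 1)
    (α β s1 s2 : ℂ) (hα : α ≠ 0) (hβ : β ≠ 0)
    (hs1 : s1 ^ 4 + ((p : ℂ) ^ 2 + 1) * s1 ^ 2 + (p : ℂ) ^ 2 = 0)
    (hs2 : s2 ^ 4 + ((p : ℂ) ^ 2 + 1) * s2 ^ 2 + (p : ℂ) ^ 2 = 0)
    (hs : s1 ≠ s2)
    (e1 e2 : B) (he1 : e1 = α • I1 + β • I2)
    (he2 : e2 = (α * s1) • I1 + (β * s2) • I2) :
    LinearIndependent ℂ ![e1, e2] ∧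
    e2 ^ 4 + ((p : ℂ) ^ 2 + 1) • (e1 ^ 2 * e2 ^ 2) + ((p : ℂ) ^ 2) • e1 ^ 4 = 0 := by
  -- basic facts about ω-combinations
  have hcoef : ∀ x y : ℂ, x • (1 : B) + y • ω = 0 → x = 0 ∧ y = 0 := by
    intro x y h
    have h' : ∑ i, (![x, y] : Fin 2 → ℂ) i • b i = 0 := by
      rw [Fin.sum_univ_two]
      simpa [hb0, hb1] using h
    have := Fintype.linearIndependent_iff.mp b.linearIndependent ![x, y] h'
    exact ⟨this 0, this 1⟩
  -- multiplication rule for combinations of the idempotents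
  have h2B : (2 : ℂ) • (1 + ω : B) = 2 * (1 + ω) := by
    rw [Algebra.smul_def, map_ofNat]
  have h2B' : (2 : ℂ) • (1 - ω : B) = 2 * (1 - ω) := by
    rw [Algebra.smul_def, map_ofNat]
  have h11 : I1 * I1 = I1 := by
    rw [hI1, smul_mul_smul_comm]
    have hx : (1 + ω) * (1 + ω) = (2 : ℂ) • (1 + ω) := by
      rw [h2B]; linear_combination hω
    rw [hx, smul_smul]
    norm_num
  have h22 : I2 * I2 = I2 := by
    rw [hI2, smul_mul_smul_comm]
    have hx : (1 - ω) * (1 - ω) = (2 : ℂ) • (1 - ω) := by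
      rw [h2B']; linear_combination hω
    rw [hx, smul_smul]
    norm_num
  have h12 : I1 * I2 = 0 := by
    rw [hI1, hI2, smul_mul_smul_comm]
    have hx : (1 + ω) * (1 - ω) = 0 := by linear_combination -hω
    rw [hx, smul_zero]
  have hmul : ∀ x y u v : ℂ,
      (x • I1 + y • I2) * (u • I1 + v • I2) = (x * u) • I1 + (y * v) • I2 := by
    intro x y u v
    have h21 : I2 * I1 = 0 := by rw [mul_comm]; exact h12
    rw [add_mul, mul_add, mul_add, smul_mul_smul_comm, smul_mul_smul_comm,
      smul_mul_smul_comm, smul_mul_smul_comm, h11, h12, h21, h22, smul_zero, smul_zero,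
      add_zero, zero_add]
  constructor
  · rw [LinearIndependent.pair_iff]
    intro s t h
    have h1 : (α * (s + t * s1)) • I1 + (β * (s + t * s2)) • I2 = 0 := by
      rw [← h, he1, he2]
      match_scalars <;> ring
    have h1' : ((2 : ℂ)⁻¹ * (α * (s + t * s1) + β * (s + t * s2))) • (1 : B) +
        ((2 : ℂ)⁻¹ * (α * (s + t * s1) - β * (s + t * s2))) • ω = 0 := by
      rw [← h1, hI1, hI2]
      match_scalars <;> ring
    obtain ⟨c1, c2⟩ := hcoef _ _ h1'
    have ha : α * (s + t * s1) = 0 := by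
      have := congrArg (· * 2) c1
      have := congrArg (· * 2) c2
      field_simp at c1 c2
      linear_combination (c1 + c2) / 2
    have hb : β * (s + t * s2) = 0 := by
      field_simp at c1 c2
      linear_combination (c1 - c2) / 2
    have ha' : s + t * s1 = 0 := by
      rcases mul_eq_zero.mp ha with h' | h'
      · exact absurd h' hα
      · exact h'
    have hb' : s + t * s2 = 0 := by
      rcases mul_eq_zero.mp hb with h' | h'
      · exact absurd h' hβ
      · exact h'
    have ht : t = 0 := by
      have : t * (s1 - s2) = 0 := by linear_combination ha' - hb'
      rcases mul_eq_zero.mp this with h' | h'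
      · exact h'
      · exact absurd (sub_eq_zero.mp h') hs
    constructor
    · have := ha'
      rw [ht] at this
      simpa using this
    · exact ht
  · have q2 : e1 * e1 = (α * α) • I1 + (β * β) • I2 := by rw [he1]; exact hmul _ _ _ _
    have q3 : e2 * e2 = ((α * s1) * (α * s1)) • I1 + ((β * s2) * (β * s2)) • I2 := by
      rw [he2]; exact hmul _ _ _ _
    have q4 : (e1 * e1) * (e1 * e1) =
        ((α * α) * (α * α)) • I1 + ((β * β) * (β * β)) • I2 := by
      rw [q2]; exact hmul _ _ _ _
    have q5 : (e2 * e2) * (e2 * e2) =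
        (((α * s1) * (α * s1)) * ((α * s1) * (α * s1))) • I1 +
        (((β * s2) * (β * s2)) * ((β * s2) * (β * s2))) • I2 := by
      rw [q3]; exact hmul _ _ _ _
    have q6 : (e1 * e1) * (e2 * e2) =
        ((α * α) * ((α * s1) * (α * s1))) • I1 +
        ((β * β) * ((β * s2) * (β * s2))) • I2 := by
      rw [q2, q3]; exact hmul _ _ _ _
    have key : e2 ^ 4 + ((p : ℂ) ^ 2 + 1) • (e1 ^ 2 * e2 ^ 2) + ((p : ℂ) ^ 2) • e1 ^ 4 =
        (α ^ 4 * (s1 ^ 4 + ((p : ℂ) ^ 2 + 1) * s1 ^ 2 + (p : ℂ) ^ 2)) • I1 +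
        (β ^ 4 * (s2 ^ 4 + ((p : ℂ) ^ 2 + 1) * s2 ^ 2 + (p : ℂ) ^ 2)) • I2 := by
      have r4 : e2 ^ 4 = (e2 * e2) * (e2 * e2) := by ring
      have r2 : e1 ^ 2 * e2 ^ 2 = (e1 * e1) * (e2 * e2) := by ring
      have r1 : e1 ^ 4 = (e1 * e1) * (e1 * e1) := by ring
      rw [r4, r2, r1, q4, q5, q6]
      match_scalars <;> ring
    rw [key, hs1, hs2, mul_zero, mul_zero, zero_smul, zero_smul, add_zero]
end

section
/- If F_1 : D_z → ℂ and F_2 : D_{z_p} → ℂ are holomorphic, then the function Φ(ζ) := F_1(z)·I_1 + F_2(z_p)·I_2 (where ζ = x e_1 + y e_2, z = x+iy, z_p = x+ipy) satisfies the Cauchy–Riemann-type condition ∂Φ/∂y · e_1 = ∂Φ/∂x · e_2 on D_ζ, i.e., Φ is monogenic. -/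
open Complex

/-- The concrete model of `B₀ = ℂ[ω]/(ω²−1)`: the product algebra `ℂ × ℂ`. -/
abbrev B0 : Type := ℂ × ℂ

/-- The element `ω` with `ω² = 1`. -/
def omegaB : B0 := (1, -1)

/-- The idempotent `I₁ = (1+ω)/2`. -/
noncomputable def Io1 : B0 := (2 : ℂ)⁻¹ • (1 + omegaB)

/-- The idempotent `I₂ = (1−ω)/2`. -/
noncomputable def Io2 : B0 := (2 : ℂ)⁻¹ • (1 - omegaB)

/-- The basis element `e₁ = e`. -/
noncomputable def eb1 : B0 := 1

/-- The basis element `e₂ = i(I₁ + p I₂)`. -/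
noncomputable def eb2 (p : ℝ) : B0 := Complex.I • (Io1 + (p : ℂ) • Io2)

noncomputable def ell (a : ℂ) : (ℝ × ℝ) →L[ℝ] ℂ :=
  (Complex.ofRealCLM.comp (ContinuousLinearMap.fst ℝ ℝ ℝ)) +
  a • (Complex.ofRealCLM.comp (ContinuousLinearMap.snd ℝ ℝ ℝ))

lemma ell_apply (a : ℂ) (q : ℝ × ℝ) : ell a q = (q.1 : ℂ) + a * (q.2 : ℂ) := by
  simp [ell, mul_comm]

lemma Io1_eq : Io1 = (1, 0) := by
  simp only [Io1, omegaB]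
  norm_num [Prod.ext_iff, Prod.smul_def]

lemma Io2_eq : Io2 = (0, 1) := by
  simp only [Io2, omegaB]
  norm_num [Prod.ext_iff, Prod.smul_def]

lemma eb2_eq (p : ℝ) : eb2 p = (Complex.I, Complex.I * p) := by
  simp [eb2, Io1_eq, Io2_eq, Prod.ext_iff, Prod.smul_def, mul_comm]

/-- If `F₁`, `F₂` are holomorphic on `D_z` and `D_{z_p}`, then
`Φ(ζ) = F₁(z) I₁ + F₂(z_p) I₂` satisfies the Cauchy–Riemann-type condition
`(∂Φ/∂y)·e₁ = (∂Φ/∂x)·e₂` on `D_ζ`, i.e. `Φ` is monogenic. -/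
theorem stmt_15 (p : ℝ) (hp : 0 < p) (hp1 : p ≠ 1)
    (D : Set (ℝ × ℝ)) (hD : IsOpen D)
    (F1 F2 : ℂ → ℂ)
    (hF1 : ∀ q ∈ D, DifferentiableAt ℂ F1 ((q.1 : ℂ) + Complex.I * (q.2 : ℂ)))
    (hF2 : ∀ q ∈ D, DifferentiableAt ℂ F2 ((q.1 : ℂ) + Complex.I * (p : ℂ) * (q.2 : ℂ)))
    (Φ : ℝ × ℝ → B0)
    (hΦ : Φ = fun q => F1 ((q.1 : ℂ) + Complex.I * (q.2 : ℂ)) • Io1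
      + F2 ((q.1 : ℂ) + Complex.I * (p : ℂ) * (q.2 : ℂ)) • Io2) :
    ∀ q ∈ D, fderiv ℝ Φ q (0, 1) * eb1 = fderiv ℝ Φ q (1, 0) * eb2 p := by
  intro q hq
  have hΦ' : Φ = fun q => (F1 (ell Complex.I q), F2 (ell (Complex.I * p) q)) := by
    funext r
    simp [hΦ, ell_apply, Io1_eq, Io2_eq, Prod.ext_iff, Prod.smul_def, mul_assoc]
  have h1 : DifferentiableAt ℂ F1 (ell Complex.I q) := by
    rw [ell_apply]; exact hF1 q hq
  have h2 : DifferentiableAt ℂ F2 (ell (Complex.I * p) q) := by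
    rw [ell_apply]; exact hF2 q hq
  set D1 : (ℝ × ℝ) →L[ℝ] ℂ :=
    ((fderiv ℂ F1 (ell Complex.I q)).restrictScalars ℝ).comp (ell Complex.I)
  set D2 : (ℝ × ℝ) →L[ℝ] ℂ :=
    ((fderiv ℂ F2 (ell (Complex.I * p) q)).restrictScalars ℝ).comp (ell (Complex.I * p))
  have hd1 : HasFDerivAt (fun r => F1 (ell Complex.I r)) D1 q :=
    ((h1.hasFDerivAt.restrictScalars ℝ).comp q (ell Complex.I).hasFDerivAt)
  have hd2 : HasFDerivAt (fun r => F2 (ell (Complex.I * p) r)) D2 q :=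
    ((h2.hasFDerivAt.restrictScalars ℝ).comp q (ell (Complex.I * p)).hasFDerivAt)
  have hΦd : HasFDerivAt Φ (D1.prod D2) q := by
    rw [hΦ']; exact hd1.prodMk hd2
  rw [hΦd.fderiv]
  have key : ∀ (l : ℂ →L[ℂ] ℂ) (w : ℂ), l w = w * l 1 := by
    intro l w
    have := l.map_smul w 1
    simpa [smul_eq_mul] using this
  set c1 := deriv F1 (ell Complex.I q) with hc1
  set c2 := deriv F2 (ell (Complex.I * p) q) with hc2
  have e1 : D1 (0, 1) = Complex.I * c1 := by
    simp only [D1, ContinuousLinearMap.comp_apply, ContinuousLinearMap.coe_restrictScalars',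
      ell_apply]
    rw [key, fderiv_apply_one_eq_deriv, hc1, ell_apply]; norm_num
  have e2 : D2 (0, 1) = Complex.I * p * c2 := by
    simp only [D2, ContinuousLinearMap.comp_apply, ContinuousLinearMap.coe_restrictScalars',
      ell_apply]
    rw [key, fderiv_apply_one_eq_deriv, hc2, ell_apply]; norm_num
  have f1 : D1 (1, 0) = c1 := by
    simp only [D1, ContinuousLinearMap.comp_apply, ContinuousLinearMap.coe_restrictScalars',
      ell_apply]
    rw [key, fderiv_apply_one_eq_deriv, hc1, ell_apply]; norm_num
  have f2 : D2 (1, 0) = c2 := by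
    simp only [D2, ContinuousLinearMap.comp_apply, ContinuousLinearMap.coe_restrictScalars',
      ell_apply]
    rw [key, fderiv_apply_one_eq_deriv, hc2, ell_apply]; norm_num
  simp only [ContinuousLinearMap.prod_apply, e1, e2, f1, f2, eb2_eq, eb1, Prod.mk_mul_mk,
    Prod.ext_iff]
  constructor <;> ring_nf <;> simp [mul_comm]
end
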